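/- Let T be a rooted tree directed toward its root, B a set of leaves, and X an edge set. The recursive construction of the blue overflow—starting with Y_0 the set of all edges in E \ X starting at a vertex of B, at successor steps adding any edge st ∈ E \ (X ∪ Y_β) with A(s, Y_β, X) ≥ 1 if one exists and otherwise stopping, and taking unions at limits—terminates, and its result does not depend on the choices made during the construction. -/

import Mathlib

open Classical

/-- A (possibly infinite) locally finite tree with all edges directed toward the
root: each non-root vertex `v` has a unique outgoing edge `v → parent v`,
encoded by its tail `v`. -/
structure RTree (V : Type*) where
  root : V
  parent : V → V
  parent_root : parent root = root
  reaches : ∀ v, ∃ n : ℕ, parent^[n] v = root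
  locFin : ∀ v, {s | parent s = v ∧ s ≠ root}.Finite

namespace RTree

variable {V : Type*} (T : RTree V)

/-- The upward neighbours of `v`. -/
def children (v : V) : Set V := {s | T.parent s = v ∧ s ≠ T.root}

/-- A leaf is a vertex with no incoming edges. -/
def IsLeaf (v : V) : Prop := T.children v = ∅

/-- `A(v, X)`: in-degree minus out-degree of `v` in the edge set `X`
(edges being encoded by their tails). -/
noncomputable def A (X : Set V) (v : V) : ℤ :=
  ((T.children v ∩ X).ncard : ℤ) - (if v ∈ X ∧ v ≠ T.root then 1 else 0)

/-- `A(v, X, Y) = A(v, X) - A(v, Y)`. -/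
noncomputable def A2 (X Y : Set V) (v : V) : ℤ := T.A X v - T.A Y v

/-- `V(X)`: the vertices incident with an edge of `X`. -/
def VX (X : Set V) : Set V := X ∪ T.parent '' X

/-- `ter X`: the vertices at which no edge of `X` starts. -/
def ter (X : Set V) : Set V := {v | v ∉ X}

/-- An edge set is rayless if it contains no ray of `T`. -/
def Rayless (X : Set V) : Prop :=
  ¬ ∃ f : ℕ → V, (∀ n, f n ∈ X) ∧ ∀ n, T.parent (f (n + 1)) = f n

/-- A leafless forest: every vertex of `V(S)` has an incoming `S`-edge. -/
def Leafless (S : Set V) : Prop :=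
  ∀ v ∈ T.VX S, ∃ s ∈ S, T.parent s = v

/-- The flow `b(X)` to `X` from the leaf set `B`: the union of the edge sets of
those paths starting at a leaf in `B` all of whose interior vertices are not
incident with an edge from `X`. -/
def flow (B X : Set V) : Set V :=
  {e | e ≠ T.root ∧ ∃ b ∈ B, ∃ n : ℕ, T.parent^[n] b = e ∧
    ∀ k, 1 ≤ k → k ≤ n → T.parent^[k] b ∉ T.VX X}

end RTree

namespace RTree

variable {V : Type*} (T : RTree V)

/-- The edge `s` (with head `parent s`) is a valid extension of the current set
`Z` in the recursive construction of the blue overflow of `X`: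
`s ∈ E \ (X ∪ Z)` and `A(s, Z, X) ≥ 1`. -/
def ValidExt (X Z : Set V) (s : V) : Prop :=
  s ≠ T.root ∧ s ∉ X ∧ s ∉ Z ∧
    (T.children s ∩ X).ncard + 1 ≤ (T.children s ∩ Z).ncard

universe u_2 in
/-- A run of the recursive construction of the blue overflow of `X` (for the
set `B` of blue leaves): start with all edges of `E \ X` starting in `B`; at
each successor step add some valid extension if one exists, otherwise keep the
set unchanged; take unions at limit steps. -/
structure Run (B X : Set V) where
  Z : Ordinal.{u_2} → Set V
  zero : Z 0 = {s | s ∈ B ∧ s ∉ X ∧ s ≠ T.root}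
  succ : ∀ α : Ordinal,
    (∃ s, T.ValidExt X (Z α) s ∧ Z (α + 1) = Z α ∪ {s}) ∨
    ((¬ ∃ s, T.ValidExt X (Z α) s) ∧ Z (α + 1) = Z α)
  limit : ∀ α : Ordinal, Order.IsSuccLimit α → Z α = ⋃ β < α, Z β

end RTree

section Aux

open RTree

variable {V : Type*} (T : RTree V) (B X : Set V)

/-- Closedness under the extension rule. -/
def RClosed (W : Set V) : Prop :=
  ∀ s, s ≠ T.root → s ∉ X → (T.children s ∩ X).ncard + 1 ≤ (T.children s ∩ W).ncard → s ∈ W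

/-- The least closed set containing the starting set. -/
def Rcl : Set V :=
  ⋂₀ {W | {s | s ∈ B ∧ s ∉ X ∧ s ≠ T.root} ⊆ W ∧ RClosed T X W}

lemma children_finite (v : V) : (T.children v).Finite := T.locFin v

lemma RTree.Run.Z_succ_subset (R : T.Run B X) (α : Ordinal) : R.Z α ⊆ R.Z (α + 1) := by
  rcases R.succ α with ⟨s, _, h⟩ | ⟨_, h⟩
  · rw [h]; exact Set.subset_union_left
  · rw [h]

lemma RTree.Run.Z_mono (R : T.Run B X) : ∀ β α, α ≤ β → R.Z α ⊆ R.Z β := by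
  intro β
  induction β using Ordinal.induction with
  | _ β ih =>
    intro α hαβ
    rcases eq_or_lt_of_le hαβ with rfl | hlt
    · exact subset_rfl
    rcases Ordinal.zero_or_succ_or_isSuccLimit β with rfl | ⟨γ, rfl⟩ | hβ
    · exact absurd hlt (not_lt_zero (a := α))
    · have hγ : γ < Order.succ γ := Order.lt_succ γ
      have hαγ : α ≤ γ := Order.lt_succ_iff.mp hlt
      have h1 : R.Z α ⊆ R.Z γ := ih γ hγ α hαγ
      have h2 : R.Z γ ⊆ R.Z (γ + 1) := R.Z_succ_subset T B X γ
      rw [Ordinal.add_one_eq_succ] at h2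
      exact h1.trans h2
    · rw [R.limit β hβ]
      intro x hx
      exact Set.mem_biUnion hlt hx

lemma RTree.Run.Z_subset_closed (R : T.Run B X) (W : Set V)
    (hW0 : {s | s ∈ B ∧ s ∉ X ∧ s ≠ T.root} ⊆ W) (hW : RClosed T X W) :
    ∀ α, R.Z α ⊆ W := by
  intro α
  induction α using Ordinal.induction with
  | _ α ih =>
    rcases Ordinal.zero_or_succ_or_isSuccLimit α with rfl | ⟨γ, rfl⟩ | hα
    · rw [R.zero]; exact hW0
    · rw [← Ordinal.add_one_eq_succ]
      have ihγ : R.Z γ ⊆ W := ih γ (Order.lt_succ γ)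
      rcases R.succ γ with ⟨s, hs, h⟩ | ⟨_, h⟩
      · rw [h]
        rintro x (hx | rfl)
        · exact ihγ hx
        · obtain ⟨h1, h2, h3, h4⟩ := hs
          refine hW x h1 h2 (h4.trans ?_)
          exact Set.ncard_le_ncard (Set.inter_subset_inter_right _ ihγ)
            ((children_finite T x).inter_of_left W)
      · rw [h]; exact ihγ
    · rw [R.limit α hα]
      exact Set.iUnion₂_subset fun β hβ => ih β hβ

lemma RTree.Run.Z_eq_Rcl (R : T.Run B X) (α : Ordinal)
    (h : ¬ ∃ s, T.ValidExt X (R.Z α) s) : R.Z α = Rcl T B X := by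
  apply subset_antisymm
  · exact fun x hx => Set.mem_sInter.mpr fun W hW => R.Z_subset_closed T B X W hW.1 hW.2 α hx
  · apply Set.sInter_subset_of_mem
    constructor
    · rw [← R.zero]; exact R.Z_mono T B X α 0 (zero_le (a := α))
    · intro s h1 h2 h3
      by_contra hs
      exact h ⟨s, h1, h2, hs, h3⟩

lemma RTree.countable (T : RTree V) : Countable V := by
  have hfin : ∀ n : ℕ, {v | T.parent^[n] v = T.root}.Finite := by
    intro n
    induction n with
    | zero =>
      exact (Set.finite_singleton T.root).subset (by intro v hv; simpa using hv)
    | succ n ih =>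
      have : {v | T.parent^[n + 1] v = T.root} ⊆
          (⋃ u ∈ {v | T.parent^[n] v = T.root}, T.children u) ∪ {T.root} := by
        intro v hv
        simp only [Set.mem_setOf_eq, Function.iterate_succ_apply] at hv
        by_cases hroot : v = T.root
        · exact Or.inr (by simp [hroot])
        · exact Or.inl (Set.mem_biUnion hv ⟨rfl, hroot⟩)
      exact ((ih.biUnion fun u _ => children_finite T u).union
        (Set.finite_singleton _)).subset this
  have : (Set.univ : Set V).Countable := by
    refine Set.Countable.mono ?_ (Set.countable_iUnion fun n => (hfin n).countable)
    intro v _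
    obtain ⟨n, hn⟩ := T.reaches v
    exact Set.mem_iUnion.mpr ⟨n, hn⟩
  exact Set.countable_univ_iff.mp this

universe uW uO in
lemma termination_aux {W : Type uW} [Countable W] (f : Ordinal.{uO} → Set W)
    (hf : Function.Injective f) : False :=
  not_small_ordinal.{uO, uO} (small_of_injective hf)

end Aux

/-- The recursive construction of the blue overflow terminates,
and its result does not depend on the choices made during the construction. -/
theorem stmt4 {V : Type*} (T : RTree V) (B X : Set V)
    (hB : ∀ b ∈ B, T.IsLeaf b) (hX : T.root ∉ X) :
    (∀ R : T.Run B X, ∃ α : Ordinal, ¬ ∃ s, T.ValidExt X (R.Z α) s) ∧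
    (∀ R₁ R₂ : T.Run B X, ∀ α₁ α₂ : Ordinal,
      (¬ ∃ s, T.ValidExt X (R₁.Z α₁) s) → (¬ ∃ s, T.ValidExt X (R₂.Z α₂) s) →
      R₁.Z α₁ = R₂.Z α₂) := by
  constructor
  · intro R
    by_contra hno
    push_neg at hno
    have hstrict : StrictMono R.Z := by
      intro α β hlt
      obtain ⟨s, hs, hsucc⟩ := (R.succ α).resolve_right fun h => (h.1 (hno α)).elim
      have h1 : R.Z α < R.Z (α + 1) := by
        rw [hsucc]
        refine lt_of_le_of_ne Set.subset_union_left fun h => hs.2.2.1 ?_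
        rw [h]; exact Set.mem_union_right _ rfl
      have h2 : R.Z (α + 1) ⊆ R.Z β := by
        apply R.Z_mono T B X β
        rw [Ordinal.add_one_eq_succ]
        exact Order.succ_le_of_lt hlt
      exact lt_of_lt_of_le h1 h2
    haveI : Countable V := T.countable
    exact termination_aux R.Z hstrict.injective
  · intro R₁ R₂ α₁ α₂ h₁ h₂
    rw [R₁.Z_eq_Rcl T B X α₁ h₁, R₂.Z_eq_Rcl T B X α₂ h₂]
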